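/- In the algebra 𝔸, any double commutator two of whose three entries lie in c·𝔸 vanishes: for all x, y, z ∈ 𝔸, [[c·x, z], c·y] = 0 and [[c·x, c·y], z] = 0, where c := a·b − b·a and [p,q] := pq − qp. -/
import Mathlib


noncomputable section

/-- The first generator of the free algebra on two generators. -/
def Agen (K : Type*) [Field K] : FreeAlgebra K (Fin 2) := FreeAlgebra.ι K 0

/-- The second generator of the free algebra on two generators. -/
def Bgen (K : Type*) [Field K] : FreeAlgebra K (Fin 2) := FreeAlgebra.ι K 1

/-- The relations `a·a·b = a·b·a` and `b·b·a = b·a·b`. -/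
inductive ARel (K : Type*) [Field K] :
    FreeAlgebra K (Fin 2) → FreeAlgebra K (Fin 2) → Prop
  | aab : ARel K (Agen K * Agen K * Bgen K) (Agen K * Bgen K * Agen K)
  | bba : ARel K (Bgen K * Bgen K * Agen K) (Bgen K * Agen K * Bgen K)

/-- The algebra `𝔸`: the quotient of the free unital associative `K`-algebra on two
generators `a`, `b` by the two-sided ideal generated by `a·a·b − a·b·a` and
`b·b·a − b·a·b`. -/
abbrev AAlg (K : Type*) [Field K] := RingQuot (ARel K)

/-- The image of the generator `a` in `𝔸`. -/
def aA (K : Type*) [Field K] : AAlg K := RingQuot.mkAlgHom K (ARel K) (Agen K)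

/-- The image of the generator `b` in `𝔸`. -/
def bA (K : Type*) [Field K] : AAlg K := RingQuot.mkAlgHom K (ARel K) (Bgen K)

/-- The commutator `c := a·b − b·a` in `𝔸`. -/
def cA (K : Type*) [Field K] : AAlg K := aA K * bA K - bA K * aA K

lemma aA_mul_cA (K : Type*) [Field K] : aA K * cA K = 0 := by
  have h := RingQuot.mkAlgHom_rel K (ARel.aab (K := K))
  simp only [cA, aA, bA, mul_sub, ← map_mul, ← mul_assoc] at *
  rw [h, sub_self]

lemma bA_mul_cA (K : Type*) [Field K] : bA K * cA K = 0 := by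
  have h := RingQuot.mkAlgHom_rel K (ARel.bba (K := K))
  simp only [cA, aA, bA, mul_sub, ← map_mul, ← mul_assoc] at *
  rw [h, sub_self]

lemma cA_mul_cA (K : Type*) [Field K] : cA K * cA K = 0 := by
  nth_rewrite 1 [cA]
  rw [sub_mul, mul_assoc, mul_assoc, aA_mul_cA, bA_mul_cA, mul_zero, mul_zero, sub_self]

lemma mul_cA_scalar (K : Type*) [Field K] :
    ∀ x : AAlg K, ∃ r : K, x * cA K = r • cA K := by
  intro x
  obtain ⟨p, rfl⟩ := RingQuot.mkAlgHom_surjective K (ARel K) x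
  induction p using FreeAlgebra.induction with
  | grade0 r =>
      refine ⟨r, ?_⟩
      rw [AlgHom.commutes, Algebra.algebraMap_eq_smul_one, smul_mul_assoc, one_mul]
  | grade1 i =>
      fin_cases i
      · refine ⟨0, ?_⟩
        show aA K * cA K = (0 : K) • cA K
        rw [aA_mul_cA, zero_smul]
      · refine ⟨0, ?_⟩
        show bA K * cA K = (0 : K) • cA K
        rw [bA_mul_cA, zero_smul]
  | mul p q hp hq =>
      obtain ⟨r, hr⟩ := hp
      obtain ⟨s, hs⟩ := hq
      refine ⟨r * s, ?_⟩
      rw [map_mul, mul_assoc, hs, mul_smul_comm, hr, smul_smul, mul_comm s r]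
  | add p q hp hq =>
      obtain ⟨r, hr⟩ := hp
      obtain ⟨s, hs⟩ := hq
      exact ⟨r + s, by rw [map_add, add_mul, hr, hs, add_smul]⟩

lemma cA_sandwich (K : Type*) [Field K] (x : AAlg K) : cA K * x * cA K = 0 := by
  obtain ⟨r, hr⟩ := mul_cA_scalar K x
  rw [mul_assoc, hr, mul_smul_comm, cA_mul_cA, smul_zero]

lemma cA_sandwich' (K : Type*) [Field K] (u w v : AAlg K) :
    (cA K * u) * w * (cA K * v) = 0 := by
  rw [mul_assoc (cA K) u w, ← mul_assoc (cA K * (u * w)) (cA K) v, cA_sandwich, zero_mul]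

/-- In `𝔸`, any double commutator two of whose three entries lie in `c·𝔸`
vanishes: `[[c·x, z], c·y] = 0` and `[[c·x, c·y], z] = 0`. -/
theorem stmt_15 (K : Type*) [Field K] [CharZero K] (x y z : AAlg K) :
    ((cA K * x) * z - z * (cA K * x)) * (cA K * y)
        - (cA K * y) * ((cA K * x) * z - z * (cA K * x)) = 0 ∧
    ((cA K * x) * (cA K * y) - (cA K * y) * (cA K * x)) * z
        - z * ((cA K * x) * (cA K * y) - (cA K * y) * (cA K * x)) = 0 := by
  set p := cA K * x with hp
  set q := cA K * y with hq
  have h1 : p * z * q = 0 := cA_sandwich' K x z y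
  have hpq : p * q = 0 := by have := cA_sandwich' K x 1 y; rwa [mul_one] at this
  have hqp : q * p = 0 := by have := cA_sandwich' K y 1 x; rwa [mul_one] at this
  have h4 : q * z * p = 0 := cA_sandwich' K y z x
  refine ⟨?_, ?_⟩
  · rw [sub_mul, mul_sub, h1, mul_assoc z p q, hpq, mul_zero, ← mul_assoc q p z, hqp,
      zero_mul, ← mul_assoc q z p, h4]
    simp
  · rw [hpq, hqp]
    simp
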